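/- There exists a constant C > 0 such that the following holds. Let G be an affine resource selection game with exactly two agent types j and k having uncertainty parameters 2 ≤ r_j < r_k and masses n_j, n_k > 0 with n = n_j + n_k. Then every WCC equilibrium flow s* of G for the vector (r_j, r_k) satisfies SC(s*) ≤ (r_j/2 + (n_k/n)·C·r_k)·SC(s_O) for every feasible flow s_O. -/

import Mathlib

open Finset

/-- An affine nonatomic routing game on edge set `E` with agent types `ι`:
each edge `e` has cost `c_e(t) = a_e t + b_e` with `a_e, b_e ≥ 0`; each type `i`
has a nonempty finite collection `paths i` of (nonempty) paths and a mass `mass i ≥ 0`. -/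
structure AffineNRG (E ι : Type) [Fintype E] [DecidableEq E] [Fintype ι] where
  a : E → ℝ
  b : E → ℝ
  a_nonneg : ∀ e, 0 ≤ a e
  b_nonneg : ∀ e, 0 ≤ b e
  paths : ι → Finset (Finset E)
  paths_nonempty : ∀ i, (paths i).Nonempty
  path_mem_nonempty : ∀ i, ∀ f ∈ paths i, f.Nonempty
  mass : ι → ℝ
  mass_nonneg : ∀ i, 0 ≤ mass i

namespace AffineNRG

variable {E ι : Type} [Fintype E] [DecidableEq E] [Fintype ι]

/-- A feasible flow assigns a nonnegative amount to each path of each type,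
with the amounts of type `i` summing to `mass i`. -/
def Feasible (G : AffineNRG E ι) (s : ι → Finset E → ℝ) : Prop :=
  (∀ i f, 0 ≤ s i f) ∧ ∀ i, ∑ f ∈ G.paths i, s i f = G.mass i

/-- The load induced on edge `e` by flow `s`. -/
def load (G : AffineNRG E ι) (s : ι → Finset E → ℝ) (e : E) : ℝ :=
  ∑ i, ∑ f ∈ (G.paths i).filter (fun f => e ∈ f), s i f

/-- The social cost `SC(s) = Σ_e (a_e s̄_e² + b_e s̄_e)`. -/
def SC (G : AffineNRG E ι) (s : ι → Finset E → ℝ) : ℝ :=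
  ∑ e, (G.a e * (G.load s e) ^ 2 + G.b e * G.load s e)

/-- `s` is a WCC equilibrium for uncertainty parameters `r = (r_i)`: it is feasible and
every type-`i` used path has modified cost (`Σ_{e∈f} (r_i a_e s̄_e + b_e)`)
no larger than any other type-`i` path. -/
def WCCEq (G : AffineNRG E ι) (r : ι → ℝ) (s : ι → Finset E → ℝ) : Prop :=
  G.Feasible s ∧ ∀ i, ∀ f₁ ∈ G.paths i, ∀ f₂ ∈ G.paths i, 0 < s i f₁ →
    ∑ e ∈ f₁, (r i * G.a e * G.load s e + G.b e) ≤
      ∑ e ∈ f₂, (r i * G.a e * G.load s e + G.b e)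

end AffineNRG

namespace AffineNRG

/-- A resource selection game: every type's strategy set is the set of singleton edges. -/
def IsRSG {E ι : Type} [Fintype E] [DecidableEq E] [Fintype ι] (G : AffineNRG E ι) : Prop :=
  ∀ i, G.paths i = Finset.univ.image (fun e => ({e} : Finset E))

end AffineNRG

private lemma aux_l1 {rk A bb Lk : ℝ} (h : 1 ≤ rk) (hA : 0 ≤ A) (hX : 0 ≤ bb)
    (h2 : rk * A + bb = Lk) : A + bb ≤ Lk := by nlinarith

private lemma aux_l2 {rk A bb Lk : ℝ} (hrk0 : 0 < rk) (hb : 0 ≤ bb)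
    (h2 : rk * A + bb = Lk) : A ≤ Lk / rk := by
  rw [le_div_iff₀ hrk0]
  nlinarith

private lemma aux_l3 {Lk rk aa bb Xe ye : ℝ} (hLk0 : 0 ≤ Lk) (hrk0 : 0 < rk)
    (ha : 0 ≤ aa) (hb : 0 ≤ bb) (hy : 0 ≤ ye) (hX : 0 ≤ Xe)
    (h1 : Lk ≤ rk * aa * Xe + bb) :
    Lk * ye ≤ 2 * rk * (aa * ye ^ 2) + bb * ye + Lk * (Xe / 2) := by
  rcases le_or_gt Xe (2 * ye) with h2 | h2
  · nlinarith [mul_nonneg (sub_nonneg.2 h1) hy,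
      mul_nonneg (mul_nonneg hrk0.le ha) (mul_nonneg (sub_nonneg.2 h2) hy),
      mul_nonneg hLk0 hX]
  · have h3 : Lk * ye ≤ Lk * (Xe / 2) := by
      apply mul_le_mul_of_nonneg_left _ hLk0
      linarith
    nlinarith [mul_nonneg (mul_nonneg hrk0.le ha) (sq_nonneg ye), mul_nonneg hb hy]

private lemma aux_l4 {aa x1 Xe ye : ℝ} (ha : 0 ≤ aa) (hx1 : 0 ≤ x1) (h1X : x1 ≤ Xe)
    (hy : 0 ≤ ye) : aa * x1 * ye ≤ aa * x1 * Xe + aa * ye ^ 2 := by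
  rcases le_total ye Xe with h | h
  · nlinarith [mul_nonneg (mul_nonneg ha hx1) (sub_nonneg.2 h), mul_nonneg ha (sq_nonneg ye)]
  · nlinarith [mul_nonneg ha (mul_nonneg (sub_nonneg.2 h1X) hy),
      mul_nonneg ha (mul_nonneg (sub_nonneg.2 h) hy),
      mul_nonneg (mul_nonneg ha hx1) (le_trans hx1 h1X)]

private lemma aux_l5 {rj aa bb x0 x1 Xe : ℝ} (hrj : 2 ≤ rj) (ha : 0 ≤ aa)
    (hx0 : 0 ≤ x0) (hx1 : 0 ≤ x1) (hXe : Xe = x0 + x1) :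
    aa * Xe ^ 2 + bb * Xe ≤
      (rj / 2 * aa * x0 ^ 2 + (bb + rj * (aa * x1)) * x0) + x1 * (aa * Xe + bb) := by
  subst hXe
  nlinarith [mul_nonneg (sub_nonneg.2 hrj) (mul_nonneg ha (mul_nonneg hx0 hx1)),
    mul_nonneg (sub_nonneg.2 hrj) (mul_nonneg ha (sq_nonneg x0)),
    mul_nonneg ha (mul_nonneg hx0 hx1), mul_nonneg ha (sq_nonneg x0)]

private lemma aux_l6 {rj aa bb x0 x1 Xe ve : ℝ} (hrj : 0 ≤ rj) (ha : 0 ≤ aa)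
    (hXe : Xe = x0 + x1) :
    rj / 2 * aa * x0 ^ 2 + (bb + rj * (aa * x1)) * x0 + (rj * aa * Xe + bb) * (ve - x0) ≤
      rj / 2 * aa * ve ^ 2 + (bb + rj * (aa * x1)) * ve := by
  subst hXe
  nlinarith [mul_nonneg (mul_nonneg hrj ha) (sq_nonneg (ve - x0))]

private lemma aux_l7 {rj aa bb x1 ye we ee ve : ℝ} (hrj : 2 ≤ rj) (ha : 0 ≤ aa)
    (hb : 0 ≤ bb) (hx1 : 0 ≤ x1) (hy : 0 ≤ ye) (he : 0 ≤ ee)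
    (hwdef : we = min ye (2 * x1)) (hvdef : ve = (ye - we) + ee * ye) :
    rj / 2 * aa * ve ^ 2 + (bb + rj * (aa * x1)) * ve ≤
      rj / 2 * (1 + ee) ^ 2 * (aa * ye ^ 2) + (1 + ee) * (bb * ye) + ee * rj * (aa * x1 * ye) := by
  have hw0 : 0 ≤ we := by rw [hwdef]; exact le_min hy (by linarith)
  have hwy : we ≤ ye := by rw [hwdef]; exact min_le_left _ _
  have hrj0 : (0:ℝ) < rj := by linarith
  -- v² ≤ (1+e)²y² - y w
  have hf1 : ve ^ 2 ≤ (1 + ee) ^ 2 * ye ^ 2 - ye * we := by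
    rw [hvdef]
    nlinarith [mul_nonneg hw0 (sub_nonneg.2 hwy), mul_nonneg (mul_nonneg he hy) hw0]
  have hf2 : bb * ve ≤ (1 + ee) * (bb * ye) := by
    rw [hvdef]
    have : (ye - we) + ee * ye ≤ (1 + ee) * ye := by nlinarith
    nlinarith [mul_nonneg hb (sub_nonneg.2 hwy), mul_nonneg hb (mul_nonneg he hy)]
  -- key cancellation: rj a x1 (y - w) ≤ (rj/2) a y w
  have hf3 : rj * (aa * x1) * (ye - we) ≤ rj / 2 * (aa * (ye * we)) := by
    rcases le_total ye (2 * x1) with h | h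
    · have : we = ye := by rw [hwdef, min_eq_left h]
      rw [this]
      nlinarith [mul_nonneg ha (sq_nonneg ye)]
    · have : we = 2 * x1 := by rw [hwdef, min_eq_right h]
      rw [this]
      nlinarith [mul_nonneg (mul_nonneg hrj0.le ha) (sq_nonneg x1)]
  have hmul1 : rj / 2 * aa * ve ^ 2 ≤ rj / 2 * aa * ((1 + ee) ^ 2 * ye ^ 2 - ye * we) :=
    mul_le_mul_of_nonneg_left hf1 (by positivity)
  have hsplit : (bb + rj * (aa * x1)) * ve = bb * ve + rj * (aa * x1) * (ye - we)
      + ee * rj * (aa * x1 * ye) := by rw [hvdef]; ring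
  have h9 : rj / 2 * aa * ((1 + ee) ^ 2 * ye ^ 2 - ye * we)
      = rj / 2 * (1 + ee) ^ 2 * (aa * ye ^ 2) - rj / 2 * (aa * (ye * we)) := by ring
  linarith

private lemma aux_div {Q rk Y2 B : ℝ} (hQ0 : 0 ≤ Q) (hY2 : 0 ≤ Y2) (hB : 0 ≤ B)
    (hrk2 : 2 ≤ rk) : Q * (4 * rk * Y2 + 2 * B) / rk ≤ Q * (4 * Y2 + B) := by
  have hrk0 : (0:ℝ) < rk := by linarith
  rw [div_le_iff₀ hrk0]
  nlinarith [mul_nonneg (mul_nonneg hQ0 hB) (by linarith : (0:ℝ) ≤ rk - 2),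
    mul_nonneg (mul_nonneg hQ0 hY2) hrk0.le]

private lemma aux_final {rj rk Y2 B K nkLk Q ee : ℝ}
    (hrj : 2 ≤ rj) (hrk : rj ≤ rk) (hY2 : 0 ≤ Y2) (hB : 0 ≤ B)
    (hQ0 : 0 ≤ Q) (hQ1 : Q ≤ 1) (he0 : 0 ≤ ee) (heQ : ee ≤ Q)
    (hK0 : 0 ≤ K) (hK : K ≤ Q * (4 * Y2 + B)) (hLk0 : 0 ≤ nkLk)
    (hLk : nkLk ≤ Q * (4 * rk * Y2 + 2 * B)) :
    rj / 2 * (1 + ee) ^ 2 * Y2 + (1 + ee) * B + ee * rj * (K + Y2) + nkLk ≤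
      (rj / 2 + Q * 12 * rk) * (Y2 + B) := by
  have hrk2 : (2:ℝ) ≤ rk := le_trans hrj hrk
  have he1 : ee ≤ 1 := le_trans heQ hQ1
  have hQS : 0 ≤ Q * rk * (Y2 + B) := by positivity
  have t1 : rj / 2 * (1 + ee) ^ 2 * Y2 ≤ rj / 2 * Y2 + (3/2) * (Q * rk * (Y2 + B)) := by
    have h1 : (1 + ee) ^ 2 * Y2 ≤ (1 + 3 * ee) * Y2 :=
      mul_le_mul_of_nonneg_right (by nlinarith) hY2
    have h1' : rj / 2 * ((1 + ee) ^ 2 * Y2) ≤ rj / 2 * ((1 + 3 * ee) * Y2) :=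
      mul_le_mul_of_nonneg_left h1 (by linarith)
    have h2 : rj * (ee * Y2) ≤ rk * (Q * (Y2 + B)) :=
      mul_le_mul hrk (mul_le_mul heQ (by linarith) hY2 hQ0) (by positivity) (by linarith)
    nlinarith [h1', h2]
  have t2 : (1 + ee) * B ≤ B + Q * rk * (Y2 + B) := by
    have : ee * B ≤ Q * rk * (Y2 + B) := by
      calc ee * B ≤ Q * B := mul_le_mul_of_nonneg_right heQ hB
        _ ≤ Q * (rk * (Y2 + B)) := by
            apply mul_le_mul_of_nonneg_left _ hQ0
            nlinarith
        _ = Q * rk * (Y2 + B) := by ring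
    linarith
  have t3 : ee * rj * (K + Y2) ≤ 5 * (Q * rk * (Y2 + B)) := by
    have h1 : ee * rj * K ≤ Q * rk * (4 * (Y2 + B)) := by
      calc ee * rj * K ≤ Q * rk * K := by
            apply mul_le_mul _ le_rfl hK0 (by positivity)
            exact mul_le_mul heQ hrk (by linarith) hQ0
        _ ≤ Q * rk * (Q * (4 * Y2 + B)) := mul_le_mul_of_nonneg_left hK (by positivity)
        _ ≤ Q * rk * (4 * (Y2 + B)) := by
            apply mul_le_mul_of_nonneg_left _ (by positivity)
            nlinarith
    have h2 : ee * rj * Y2 ≤ Q * rk * (Y2 + B) := by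
      apply mul_le_mul _ (by linarith) hY2 (by positivity)
      exact mul_le_mul heQ hrk (by linarith) hQ0
    linarith
  have t4 : nkLk ≤ 4 * (Q * rk * (Y2 + B)) := by
    have : Q * (4 * rk * Y2 + 2 * B) ≤ Q * (rk * (4 * Y2 + B)) := by
      apply mul_le_mul_of_nonneg_left _ hQ0
      nlinarith
    nlinarith [mul_nonneg (mul_nonneg hQ0 (by linarith : (0:ℝ) ≤ rk)) hB]
  have hfin : rj / 2 * Y2 + B ≤ (rj / 2) * (Y2 + B) := by nlinarith
  nlinarith [hQS]

set_option maxHeartbeats 1600000 in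
open AffineNRG in
/-- There is a universal constant `C > 0` such that in any affine resource selection game with
exactly two agent types `j = 0` and `k = 1`, uncertainty parameters `2 ≤ r_j < r_k` and masses
`n_j, n_k > 0` with `n = n_j + n_k`, every WCC equilibrium `s` for `(r_j, r_k)` satisfies
`SC(s) ≤ (r_j/2 + (n_k/n)·C·r_k)·SC(sO)` for every feasible flow `sO`. -/
theorem stmt_5 : ∃ C : ℝ, 0 < C ∧
    ∀ (E : Type) [Fintype E] [DecidableEq E] [Nonempty E]
      (G : AffineNRG E (Fin 2)), G.IsRSG →
      ∀ rj rk : ℝ, 2 ≤ rj → rj < rk →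
      0 < G.mass 0 → 0 < G.mass 1 →
      ∀ s, G.WCCEq (fun i => if i = 0 then rj else rk) s →
      ∀ sO, G.Feasible sO →
      G.SC s ≤ (rj / 2 + G.mass 1 / (G.mass 0 + G.mass 1) * C * rk) * G.SC sO := by
  classical
  refine ⟨12, by norm_num, ?_⟩
  intro E _ _ _ G hRSG rj rk hrj2 hrjk hm0 hm1 s hWCC sO hO
  obtain ⟨⟨hsnn, hsmass⟩, heqc⟩ := hWCC
  obtain ⟨hOnn, hOmass⟩ := hO
  -- basic notation
  set a : E → ℝ := G.a with ha
  set b : E → ℝ := G.b with hb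
  have han : ∀ e, 0 ≤ a e := G.a_nonneg
  have hbn : ∀ e, 0 ≤ b e := G.b_nonneg
  set nj : ℝ := G.mass 0 with hnj
  set nk : ℝ := G.mass 1 with hnk
  set n : ℝ := nj + nk with hn
  have hn0 : 0 < n := by positivity
  set x0 : E → ℝ := fun e => s 0 {e} with hx0
  set x1 : E → ℝ := fun e => s 1 {e} with hx1
  set X : E → ℝ := G.load s with hX
  set y : E → ℝ := G.load sO with hy
  have hmem : ∀ (i : Fin 2) (e : E), ({e} : Finset E) ∈ G.paths i := by
    intro i e; rw [hRSG i]; exact Finset.mem_image_of_mem _ (Finset.mem_univ e)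
  have hfil : ∀ (i : Fin 2) (e : E),
      (G.paths i).filter (fun f => e ∈ f) = {({e} : Finset E)} := by
    intro i e
    rw [hRSG i]
    ext f
    simp only [Finset.mem_filter, Finset.mem_image, Finset.mem_univ, true_and,
      Finset.mem_singleton]
    constructor
    · rintro ⟨⟨e', rfl⟩, he⟩
      simp only [Finset.mem_singleton] at he
      subst he; rfl
    · rintro rfl
      exact ⟨⟨e, rfl⟩, Finset.mem_singleton_self e⟩
  have hloadeq : ∀ (t : Fin 2 → Finset E → ℝ) (e : E),
      G.load t e = t 0 {e} + t 1 {e} := by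
    intro t e
    rw [AffineNRG.load, Fin.sum_univ_two, hfil 0 e, hfil 1 e,
      Finset.sum_singleton, Finset.sum_singleton]
  have hXe : ∀ e, X e = x0 e + x1 e := fun e => hloadeq s e
  have hmasseq : ∀ (t : Fin 2 → Finset E → ℝ), G.Feasible t →
      ∀ i : Fin 2, ∑ e, t i {e} = G.mass i := by
    intro t ht i
    rw [← ht.2 i, hRSG i, Finset.sum_image]
    intro e _ e' _ h
    exact Finset.singleton_injective h
  have hx0sum : ∑ e, x0 e = nj := hmasseq s ⟨hsnn, hsmass⟩ 0
  have hx1sum : ∑ e, x1 e = nk := hmasseq s ⟨hsnn, hsmass⟩ 1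
  have hysum : ∑ e, y e = n := by
    have h0 := hmasseq sO ⟨hOnn, hOmass⟩ 0
    have h1 := hmasseq sO ⟨hOnn, hOmass⟩ 1
    calc ∑ e, y e = ∑ e, (sO 0 {e} + sO 1 {e}) := by
          apply Finset.sum_congr rfl; intro e _; exact hloadeq sO e
      _ = n := by rw [Finset.sum_add_distrib, h0, h1]
  have hx0n : ∀ e, 0 ≤ x0 e := fun e => hsnn 0 {e}
  have hx1n : ∀ e, 0 ≤ x1 e := fun e => hsnn 1 {e}
  have hXn : ∀ e, 0 ≤ X e := fun e => by rw [hXe e]; exact add_nonneg (hx0n e) (hx1n e)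
  have hyn : ∀ e, 0 ≤ y e := fun e => by
    show (0:ℝ) ≤ G.load sO e
    rw [hloadeq sO e]; exact add_nonneg (hOnn 0 {e}) (hOnn 1 {e})
  have hXsum : ∑ e, X e = n := by
    calc ∑ e, X e = ∑ e, (x0 e + x1 e) := Finset.sum_congr rfl fun e _ => hXe e
      _ = n := by rw [Finset.sum_add_distrib, hx0sum, hx1sum]
  clear_value nj nk n
  have hSCs : G.SC s = ∑ e, (a e * X e ^ 2 + b e * X e) := rfl
  have hSCO : G.SC sO = ∑ e, (a e * y e ^ 2 + b e * y e) := rfl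
  -- equilibrium conditions on singletons
  have hkey : ∀ (i : Fin 2) (e f : E), 0 < s i {e} →
      (if i = 0 then rj else rk) * a e * X e + b e ≤
        (if i = 0 then rj else rk) * a f * X f + b f := by
    intro i e f hpos
    have h := heqc i {e} (hmem i e) {f} (hmem i f) hpos
    simpa using h
  have hkeyj : ∀ e f, 0 < x0 e → rj * a e * X e + b e ≤ rj * a f * X f + b f := by
    intro e f hpos
    have h := hkey 0 e f hpos
    simpa using h
  have hkeyk : ∀ e f, 0 < x1 e → rk * a e * X e + b e ≤ rk * a f * X f + b f := by
    intro e f hpos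
    have h := hkey 1 e f hpos
    norm_num at h
    exact h
  clear_value a b x0 x1 X y
  -- minimum modified costs
  have hne : (Finset.univ : Finset E).Nonempty := Finset.univ_nonempty
  set Lk : ℝ := Finset.univ.inf' hne (fun e => rk * a e * X e + b e) with hLkdef
  set Lj : ℝ := Finset.univ.inf' hne (fun e => rj * a e * X e + b e) with hLjdef
  have hLkle : ∀ e, Lk ≤ rk * a e * X e + b e := fun e => Finset.inf'_le _ (Finset.mem_univ e)
  have hLjle : ∀ e, Lj ≤ rj * a e * X e + b e := fun e => Finset.inf'_le _ (Finset.mem_univ e)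
  obtain ⟨ek, -, hek⟩ := Finset.exists_mem_eq_inf' hne (fun e => rk * a e * X e + b e)
  obtain ⟨ej, -, hej⟩ := Finset.exists_mem_eq_inf' hne (fun e => rj * a e * X e + b e)
  have hrj0 : (0:ℝ) < rj := by linarith
  have hrk0 : (0:ℝ) < rk := by linarith
  have hekk : Lk = rk * a ek * X ek + b ek := hek
  have hejj : Lj = rj * a ej * X ej + b ej := hej
  clear_value Lk Lj
  have hLk0 : 0 ≤ Lk := by
    rw [hekk]
    exact add_nonneg (mul_nonneg (mul_nonneg hrk0.le (han ek)) (hXn ek)) (hbn ek)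
  have hLj0 : 0 ≤ Lj := by
    rw [hejj]
    exact add_nonneg (mul_nonneg (mul_nonneg hrj0.le (han ej)) (hXn ej)) (hbn ej)
  have hgke : ∀ e, 0 < x1 e → rk * a e * X e + b e = Lk := by
    intro e h
    have h1 : rk * a e * X e + b e ≤ rk * a ek * X ek + b ek := hkeyk e ek h
    have h2 : Lk ≤ rk * a e * X e + b e := hLkle e
    rw [hekk]; linarith
  have hgje : ∀ e, 0 < x0 e → rj * a e * X e + b e = Lj := by
    intro e h
    have h1 : rj * a e * X e + b e ≤ rj * a ej * X ej + b ej := hkeyj e ej h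
    have h2 : Lj ≤ rj * a e * X e + b e := hLjle e
    rw [hejj]; linarith
  -- optimum cost pieces
  set Y2 : ℝ := ∑ e, a e * y e ^ 2 with hY2
  set B : ℝ := ∑ e, b e * y e with hB
  have hY20 : 0 ≤ Y2 :=
    Finset.sum_nonneg fun e _ => mul_nonneg (han e) (sq_nonneg _)
  have hB0 : 0 ≤ B := Finset.sum_nonneg fun e _ => mul_nonneg (hbn e) (hyn e)
  have hS0 : G.SC sO = Y2 + B := by
    rw [hSCO, Finset.sum_add_distrib, hY2, hB]
  clear_value Y2 B
  -- (P1) total cost of type k at equilibrium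
  have hPk : ∑ e, x1 e * (a e * X e + b e) ≤ nk * Lk := by
    rw [← hx1sum, Finset.sum_mul]
    apply Finset.sum_le_sum
    intro e _
    rcases eq_or_lt_of_le (hx1n e) with h | h
    · rw [← h]; simp
    · have h2 : rk * (a e * X e) + b e = Lk := by linear_combination hgke e h
      exact mul_le_mul_of_nonneg_left
        (aux_l1 (by linarith) (mul_nonneg (han e) (hXn e)) (hbn e) h2) (hx1n e)
  -- (P2) K = Σ a x1 X bound
  set K : ℝ := ∑ e, a e * x1 e * X e with hKdef
  have hK0 : 0 ≤ K := by
    rw [hKdef]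
    exact Finset.sum_nonneg fun e _ => mul_nonneg (mul_nonneg (han e) (hx1n e)) (hXn e)
  have hKb : K ≤ nk * (Lk / rk) := by
    rw [hKdef, ← hx1sum, Finset.sum_mul]
    apply Finset.sum_le_sum
    intro e _
    rcases eq_or_lt_of_le (hx1n e) with h | h
    · rw [← h]; simp
    · have h2 : rk * (a e * X e) + b e = Lk := by linear_combination hgke e h
      have h1 : a e * X e ≤ Lk / rk := aux_l2 hrk0 (hbn e) h2
      calc a e * x1 e * X e = x1 e * (a e * X e) := by ring
        _ ≤ x1 e * (Lk / rk) := mul_le_mul_of_nonneg_left h1 (hx1n e)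
  clear_value K
  -- (P3) bound on Lk via opt flow on lightly loaded edges
  have hLkn : Lk * n ≤ 2 * (2 * rk * Y2 + B) := by
    have hsum := Finset.sum_le_sum (fun e (_ : e ∈ Finset.univ) =>
      aux_l3 hLk0 hrk0 (han e) (hbn e) (hyn e) (hXn e) (hLkle e))
    have hL : ∑ e, Lk * y e = Lk * n := by rw [← Finset.mul_sum, hysum]
    have hR : ∑ e, (2 * rk * (a e * y e ^ 2) + b e * y e + Lk * (X e / 2)) =
        2 * rk * Y2 + B + Lk * (n / 2) := by
      rw [Finset.sum_add_distrib, Finset.sum_add_distrib, ← Finset.mul_sum,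
        ← Finset.mul_sum, ← Finset.sum_div, hXsum, hY2, hB]
    rw [hL, hR] at hsum
    linarith only [hsum]
  -- (P4) cross term bound
  have hxyb : ∑ e, a e * x1 e * y e ≤ K + Y2 := by
    rw [hKdef, hY2, ← Finset.sum_add_distrib]
    apply Finset.sum_le_sum
    intro e _
    have h1X : x1 e ≤ X e := by rw [hXe e]; exact le_add_of_nonneg_left (hx0n e)
    exact aux_l4 (han e) (hx1n e) h1X (hyn e)
  -- the modified optimum flow: w, W, epsilon, v
  set w : E → ℝ := fun e => min (y e) (2 * x1 e) with hwdef
  have hwe : ∀ e, w e = min (y e) (2 * x1 e) := fun e => rfl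
  have hw0 : ∀ e, 0 ≤ w e := fun e =>
    le_min (hyn e) (by linarith [hx1n e])
  have hwy : ∀ e, w e ≤ y e := fun e => min_le_left _ _
  have hwx1 : ∀ e, w e ≤ 2 * x1 e := fun e => min_le_right _ _
  set W : ℝ := ∑ e, w e with hWdef
  have hW2nk : W ≤ 2 * nk := by
    have h1 : W ≤ ∑ e, 2 * x1 e := by
      rw [hWdef]
      exact Finset.sum_le_sum fun e _ => hwx1 e
    have h2 : ∑ e, 2 * x1 e = 2 * nk := by rw [← Finset.mul_sum, hx1sum]
    linarith only [h1, h2]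
  have hsumyw : ∑ e, (y e - w e) = n - W := by
    rw [Finset.sum_sub_distrib, hysum, hWdef]
  clear_value w W
  set ε : ℝ := max (W - nk) 0 / n with hεdef
  have hε0 : 0 ≤ ε := div_nonneg (le_max_right _ _) hn0.le
  have hQ1 : nk / n ≤ 1 := by rw [div_le_one hn0]; linarith only [hm0.le, hn]
  have hmax : max (W - nk) 0 ≤ nk := max_le (by linarith only [hW2nk]) hm1.le
  have hεQ : ε ≤ nk / n := by
    rw [hεdef]
    gcongr
  have hεn : ε * n = max (W - nk) 0 := by
    rw [hεdef]
    exact div_mul_cancel₀ _ hn0.ne'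
  clear_value ε
  set v : E → ℝ := fun e => (y e - w e) + ε * y e with hvdef
  have hve : ∀ e, v e = (y e - w e) + ε * y e := fun e => rfl
  have hvn : ∀ e, 0 ≤ v e := fun e => by
    rw [hve e]
    have h1 := hwy e
    have h2 := mul_nonneg hε0 (hyn e)
    linarith only [h1, h2]
  have hvsum : nj ≤ ∑ e, v e := by
    have h1 : ∑ e, v e = (n - W) + ε * n := by
      calc ∑ e, v e = ∑ e, ((y e - w e) + ε * y e) :=
            Finset.sum_congr rfl fun e _ => hve e
        _ = (n - W) + ε * n := by
            rw [Finset.sum_add_distrib, hsumyw, ← Finset.mul_sum, hysum]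
    rw [h1, hεn]
    linarith only [le_max_left (W - nk) 0, hn]
  clear_value v
  -- step 1: SC s ≤ F(x0) + Σ x1 (aX+b)
  have step1 : G.SC s ≤ (∑ e, (rj / 2 * a e * x0 e ^ 2 + (b e + rj * (a e * x1 e)) * x0 e))
      + ∑ e, x1 e * (a e * X e + b e) := by
    rw [hSCs, ← Finset.sum_add_distrib]
    exact Finset.sum_le_sum fun e _ => aux_l5 hrj2 (han e) (hx0n e) (hx1n e) (hXe e)
  -- step 2: F(x0) ≤ F(v)
  have step2 : (∑ e, (rj / 2 * a e * x0 e ^ 2 + (b e + rj * (a e * x1 e)) * x0 e)) ≤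
      ∑ e, (rj / 2 * a e * v e ^ 2 + (b e + rj * (a e * x1 e)) * v e) := by
    have h3 : ∑ e, (rj / 2 * a e * x0 e ^ 2 + (b e + rj * (a e * x1 e)) * x0 e
        + (rj * a e * X e + b e) * (v e - x0 e)) ≤
        ∑ e, (rj / 2 * a e * v e ^ 2 + (b e + rj * (a e * x1 e)) * v e) :=
      Finset.sum_le_sum fun e _ => aux_l6 hrj0.le (han e) (hXe e)
    have h4 : ∑ e, (rj / 2 * a e * x0 e ^ 2 + (b e + rj * (a e * x1 e)) * x0 e
        + (rj * a e * X e + b e) * (v e - x0 e)) =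
        (∑ e, (rj / 2 * a e * x0 e ^ 2 + (b e + rj * (a e * x1 e)) * x0 e))
        + ((∑ e, (rj * a e * X e + b e) * v e) - ∑ e, (rj * a e * X e + b e) * x0 e) := by
      rw [Finset.sum_add_distrib, ← Finset.sum_sub_distrib]
      congr 1
      exact Finset.sum_congr rfl fun e _ => by ring
    have h1 : ∑ e, (rj * a e * X e + b e) * x0 e = Lj * nj := by
      have hc : ∀ e ∈ Finset.univ, (rj * a e * X e + b e) * x0 e = Lj * x0 e := by
        intro e _
        rcases eq_or_lt_of_le (hx0n e) with h | h
        · rw [← h]; ring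
        · rw [hgje e h]
      rw [Finset.sum_congr rfl hc, ← Finset.mul_sum, hx0sum]
    have h2 : Lj * nj ≤ ∑ e, (rj * a e * X e + b e) * v e := by
      calc Lj * nj ≤ Lj * ∑ e, v e := mul_le_mul_of_nonneg_left hvsum hLj0
        _ = ∑ e, Lj * v e := Finset.mul_sum _ _ _
        _ ≤ ∑ e, (rj * a e * X e + b e) * v e :=
          Finset.sum_le_sum fun e _ => mul_le_mul_of_nonneg_right (hLjle e) (hvn e)
    rw [h4] at h3
    linarith only [h3, h1, h2]
  -- step 3: F(v) is bounded by the modified optimum cost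
  have step3 : (∑ e, (rj / 2 * a e * v e ^ 2 + (b e + rj * (a e * x1 e)) * v e)) ≤
      rj / 2 * (1 + ε) ^ 2 * Y2 + (1 + ε) * B + ε * rj * (∑ e, a e * x1 e * y e) := by
    have hRHS : rj / 2 * (1 + ε) ^ 2 * Y2 + (1 + ε) * B
        + ε * rj * (∑ e, a e * x1 e * y e) =
        ∑ e, (rj / 2 * (1 + ε) ^ 2 * (a e * y e ^ 2) + (1 + ε) * (b e * y e)
          + ε * rj * (a e * x1 e * y e)) := by
      rw [hY2, hB, Finset.mul_sum, Finset.mul_sum, Finset.mul_sum,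
        ← Finset.sum_add_distrib, ← Finset.sum_add_distrib]
    rw [hRHS]
    exact Finset.sum_le_sum fun e _ =>
      aux_l7 hrj2 (han e) (hbn e) (hx1n e) (hyn e) hε0 (hwe e) (hve e)
  -- final assembly
  have hQ0 : 0 ≤ nk / n := div_nonneg hm1.le hn0.le
  have hnkLk0 : 0 ≤ nk * Lk := mul_nonneg hm1.le hLk0
  have hnkLk : nk * Lk ≤ nk / n * (4 * rk * Y2 + 2 * B) := by
    have h1 : nk * Lk = nk / n * (Lk * n) := by
      field_simp
    rw [h1]
    exact mul_le_mul_of_nonneg_left (by linarith only [hLkn]) hQ0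
  have hKQ : K ≤ nk / n * (4 * Y2 + B) := by
    have h4 : nk * (Lk / rk) = (nk * Lk) / rk := by ring
    have h5 : (nk * Lk) / rk ≤ (nk / n * (4 * rk * Y2 + 2 * B)) / rk := by gcongr
    have h6 : (nk / n * (4 * rk * Y2 + 2 * B)) / rk ≤ nk / n * (4 * Y2 + B) :=
      aux_div hQ0 hY20 hB0 (by linarith only [hrj2, hrjk])
    linarith only [hKb, h4, h5, h6]
  have hfinal := aux_final hrj2 hrjk.le hY20 hB0 hQ0 hQ1 hε0 hεQ hK0 hKQ hnkLk0 hnkLk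
  have hx1K : ε * rj * (∑ e, a e * x1 e * y e) ≤ ε * rj * (K + Y2) :=
    mul_le_mul_of_nonneg_left hxyb (mul_nonneg hε0 hrj0.le)
  have hmain : G.SC s ≤ (rj / 2 + nk / n * 12 * rk) * (Y2 + B) := by
    linarith only [step1, step2, step3, hPk, hx1K, hfinal]
  rw [hS0]
  exact hmain
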